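/- Let 𝓗 be a real Hilbert space, m > 0, and A : 𝓗 → 𝓗* a strongly monotone map with monotonicity constant m. Let R > 0 and 𝓑 = {u ∈ 𝓗 : ‖u‖ ≤ R}, and suppose the restriction of A to 𝓑 is Lipschitz continuous with Lipschitz constant M. Let J : 𝓗 → 𝓗* be the duality map, fix f ∈ 𝓗*, and define Q : 𝓑 → 𝓗 by Qu = u − (m/M²)·J^{−1}(Au − f). If R ≥ (2/m)·‖A0 − f‖_{𝓗*}, then Q maps 𝓑 into itself: ‖Qu‖ ≤ R for all u ∈ 𝓑. -/

import Mathlib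

open Filter Topology

/-- **The iteration map preserves the ball.**
Let `𝓗` be a real Hilbert space, `A : 𝓗 → 𝓗*` strongly monotone with constant `m > 0`,
Lipschitz with constant `M` on the closed ball `𝓑` of radius `R`, let `J` be the duality map,
`f ∈ 𝓗*`, and `Q u = u - (m/M²) J⁻¹(Au - f)`.  If `R ≥ (2/m)·‖A0 - f‖` then `Q` maps `𝓑`
into itself. -/
theorem iteration_map_maps_ball_into_itself
    {𝓗 : Type*} [NormedAddCommGroup 𝓗] [InnerProductSpace ℝ 𝓗] [CompleteSpace 𝓗]
    (m : ℝ) (hm : 0 < m) (A : 𝓗 → StrongDual ℝ 𝓗)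
    (hmono : ∀ u v : 𝓗, m * ‖u - v‖ ^ 2 ≤ (A u - A v) (u - v))
    (R : ℝ) (hR : 0 < R) (M : ℝ) (hmM : m ≤ M)
    (hlip : ∀ u v : 𝓗, ‖u‖ ≤ R → ‖v‖ ≤ R → ‖A u - A v‖ ≤ M * ‖u - v‖)
    (f : StrongDual ℝ 𝓗)
    (hRf : 2 / m * ‖A 0 - f‖ ≤ R) :
    ∀ u : 𝓗, ‖u‖ ≤ R →
      ‖u - (m / M ^ 2) • (InnerProductSpace.toDual ℝ 𝓗).symm (A u - f)‖ ≤ R := by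
  intro u hu
  have hM : 0 < M := lt_of_lt_of_le hm hmM
  set t : ℝ := m / M ^ 2 with ht
  have htpos : 0 < t := div_pos hm (by positivity)
  have ht2 : t * M ^ 2 = m := by rw [ht]; field_simp [hM.ne']
  have ht3 : t ^ 2 * M ^ 2 = t * m := by rw [sq, mul_assoc, ht2]
  have hy1 : t * m ≤ 1 := by
    rw [ht, div_mul_eq_mul_div, div_le_one (by positivity)]
    nlinarith
  set b : 𝓗 := (InnerProductSpace.toDual ℝ 𝓗).symm (A u - A 0) with hbdef
  set g : 𝓗 := (InnerProductSpace.toDual ℝ 𝓗).symm (A 0 - f) with hgdef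
  have hw : (InnerProductSpace.toDual ℝ 𝓗).symm (A u - f) = b + g := by
    rw [hbdef, hgdef, ← map_add]
    congr 1
    abel
  -- inner product bound
  have hinner : m * ‖u‖ ^ 2 ≤ inner ℝ u b := by
    have h := hmono u 0
    simp only [sub_zero] at h
    have h2 : (inner ℝ u b : ℝ) = (A u - A 0) u := by
      rw [real_inner_comm, hbdef, InnerProductSpace.toDual_symm_apply]
    linarith
  -- norm bound on b
  have hbn : ‖b‖ ≤ M * ‖u‖ := by
    have h := hlip u 0 hu (by simp [hR.le])
    rw [hbdef, LinearIsometryEquiv.norm_map]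
    simpa using h
  -- norm bound on g
  have hgn : ‖g‖ ≤ m * R / 2 := by
    have h1 : ‖g‖ = ‖A 0 - f‖ := by rw [hgdef, LinearIsometryEquiv.norm_map]
    rw [h1]
    rw [div_mul_eq_mul_div, div_le_iff₀ hm] at hRf
    linarith
  -- squared contraction estimate
  have hexp : ‖u - t • b‖ ^ 2 = ‖u‖ ^ 2 - 2 * (t * inner ℝ u b) + t ^ 2 * ‖b‖ ^ 2 := by
    rw [norm_sub_sq_real, real_inner_smul_right, norm_smul]
    rw [Real.norm_eq_abs, abs_of_pos htpos]
    ring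
  have hbn2 : ‖b‖ ^ 2 ≤ (M * ‖u‖) ^ 2 :=
    pow_le_pow_left₀ (norm_nonneg _) hbn 2
  have e1 : t * (m * ‖u‖ ^ 2) ≤ t * inner ℝ u b :=
    mul_le_mul_of_nonneg_left hinner htpos.le
  have e2 : t ^ 2 * ‖b‖ ^ 2 ≤ t ^ 2 * (M * ‖u‖) ^ 2 :=
    mul_le_mul_of_nonneg_left hbn2 (sq_nonneg t)
  have hstep : ‖u - t • b‖ ^ 2 ≤ (1 - t * m) * ‖u‖ ^ 2 := by
    rw [hexp]
    nlinarith [sq_nonneg ‖u‖]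
  have hsq : ‖u - t • b‖ ^ 2 ≤ ((1 - t * m / 2) * R) ^ 2 := by
    have h1 : (1 - t * m) * ‖u‖ ^ 2 ≤ (1 - t * m) * R ^ 2 := by
      apply mul_le_mul_of_nonneg_left _ (by linarith)
      nlinarith [norm_nonneg u]
    nlinarith [sq_nonneg (t * m), sq_nonneg R, mul_pos htpos hm]
  have h1nn : 0 ≤ (1 - t * m / 2) * R := by
    apply mul_nonneg _ hR.le
    linarith
  have hcontr : ‖u - t • b‖ ≤ (1 - t * m / 2) * R := by
    have h := Real.sqrt_le_sqrt hsq
    rwa [Real.sqrt_sq (norm_nonneg _), Real.sqrt_sq h1nn] at h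
  calc ‖u - t • ((InnerProductSpace.toDual ℝ 𝓗).symm (A u - f))‖
      = ‖(u - t • b) - t • g‖ := by rw [hw, smul_add]; congr 1; abel
    _ ≤ ‖u - t • b‖ + ‖t • g‖ := norm_sub_le _ _
    _ ≤ (1 - t * m / 2) * R + t * (m * R / 2) := by
        have h : ‖t • g‖ = t * ‖g‖ := by
          rw [norm_smul, Real.norm_eq_abs, abs_of_pos htpos]
        rw [h]
        exact add_le_add hcontr (mul_le_mul_of_nonneg_left hgn htpos.le)
    _ = R := by ring
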